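/- arXiv:2207.14459 — 2 statements merged into one kernel-verified Lean document; each statement's English description precedes it below -/
import Mathlib

section
/- Let N, K, L be positive integers with K < N, and ω(L) = Σ_{i=1}^{N-K} (-1)^{i+1} C(N-K,i) (1+i)^{L-1} / i^{L}. Then ω(L) / ((N-K)·2^{L-1}) → 1 as L → ∞. -/
open Real Finset Filter

/-- The `i = 1` term dominates: `ω(L)/((N-K)·2^{L-1}) → 1` as `L → ∞`, where
`ω(L) = Σ_{i=1}^{N-K} (-1)^{i+1} C(N-K,i) (1+i)^{L-1}/i^L`. -/
theorem stmt_5 (N K : ℕ) (hN : 0 < N) (hK : 0 < K) (hKN : K < N) :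
    Tendsto (fun L : ℕ =>
        (∑ i ∈ Finset.Icc 1 (N - K),
            (-1 : ℝ) ^ (i + 1) * (Nat.choose (N - K) i : ℝ) *
              (1 + (i : ℝ)) ^ (L - 1) / (i : ℝ) ^ L) /
          (((N : ℝ) - (K : ℝ)) * 2 ^ (L - 1)))
      atTop (nhds 1) := by
  set M := N - K with hMdef
  have hM1 : 1 ≤ M := by omega
  have hMR : ((N : ℝ) - (K : ℝ)) = (M : ℝ) := by
    rw [hMdef, Nat.cast_sub hKN.le]
  have hMpos : (0 : ℝ) < (M : ℝ) := by exact_mod_cast hM1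
  have key : ∀ L : ℕ,
      (∑ i ∈ Finset.Icc 1 M,
          (-1 : ℝ) ^ (i + 1) * (Nat.choose M i : ℝ) *
            (1 + (i : ℝ)) ^ (L - 1) / (i : ℝ) ^ L) /
        (((N : ℝ) - (K : ℝ)) * 2 ^ (L - 1))
      = ∑ i ∈ Finset.Icc 1 M,
          ((-1 : ℝ) ^ (i + 1) * (Nat.choose M i : ℝ) *
            (1 + (i : ℝ)) ^ (L - 1) / (i : ℝ) ^ L) /
          ((M : ℝ) * 2 ^ (L - 1)) := by
    intro L
    rw [hMR, Finset.sum_div]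
  simp only [key]
  have hsum : (∑ i ∈ Finset.Icc 1 M, (if i = 1 then (1 : ℝ) else 0)) = 1 := by
    rw [Finset.sum_ite_eq' (Finset.Icc 1 M) 1 (fun _ => (1 : ℝ))]
    simp [hM1]
  have main : Tendsto (fun L : ℕ =>
      ∑ i ∈ Finset.Icc 1 M,
          ((-1 : ℝ) ^ (i + 1) * (Nat.choose M i : ℝ) *
            (1 + (i : ℝ)) ^ (L - 1) / (i : ℝ) ^ L) /
          ((M : ℝ) * 2 ^ (L - 1)))
      atTop (nhds (∑ i ∈ Finset.Icc 1 M, (if i = 1 then (1 : ℝ) else 0))) := by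
    apply tendsto_finset_sum
    intro i hi
    rcases eq_or_ne i 1 with h1 | h1
    · subst h1
      rw [if_pos rfl]
      have heq : ∀ L : ℕ,
          ((-1 : ℝ) ^ (1 + 1) * (Nat.choose M 1 : ℝ) *
            (1 + ((1 : ℕ) : ℝ)) ^ (L - 1) / ((1 : ℕ) : ℝ) ^ L) /
          ((M : ℝ) * 2 ^ (L - 1)) = 1 := by
        intro L
        have h2 : (0 : ℝ) < (2 : ℝ) ^ (L - 1) := by positivity
        rw [Nat.choose_one_right]
        push_cast
        rw [one_pow, div_one]
        field_simp
        norm_num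
      simpa only [heq] using tendsto_const_nhds
    · have hi2 : 2 ≤ i := by
        simp only [Finset.mem_Icc] at hi; omega
      rw [if_neg h1]
      have hipos : (0 : ℝ) < (i : ℝ) := by
        have : (0:ℕ) < i := by omega
        exact_mod_cast this
      set r : ℝ := (1 + (i : ℝ)) / (2 * (i : ℝ)) with hr
      have hr0 : 0 ≤ r := by positivity
      have hr1 : r < 1 := by
        rw [hr, div_lt_one (by positivity)]
        have : (2 : ℝ) ≤ (i : ℝ) := by exact_mod_cast hi2
        linarith
      set c : ℝ := (-1 : ℝ) ^ (i + 1) * (Nat.choose M i : ℝ) / ((i : ℝ) * (M : ℝ)) with hc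
      have heq : (fun L : ℕ =>
          ((-1 : ℝ) ^ (i + 1) * (Nat.choose M i : ℝ) *
            (1 + (i : ℝ)) ^ (L - 1) / (i : ℝ) ^ L) /
          ((M : ℝ) * 2 ^ (L - 1))) =ᶠ[atTop] (fun L : ℕ => c * r ^ (L - 1)) := by
        filter_upwards [eventually_ge_atTop 1] with L hL
        have hL' : L = (L - 1) + 1 := by omega
        rw [hc, hr, div_pow, hL']
        simp only [Nat.add_sub_cancel]
        rw [pow_succ, mul_pow]
        have h2 : (0 : ℝ) < (2 : ℝ) ^ (L - 1) := by positivity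
        have hip : (0 : ℝ) < (i : ℝ) ^ (L - 1) := by positivity
        field_simp
        ring
      have hlim : Tendsto (fun L : ℕ => c * r ^ (L - 1)) atTop (nhds 0) := by
        have h1 : Tendsto (fun n : ℕ => r ^ n) atTop (nhds 0) :=
          tendsto_pow_atTop_nhds_zero_of_lt_one hr0 hr1
        have h2 : Tendsto (fun L : ℕ => L - 1) atTop atTop :=
          tendsto_sub_atTop_nat 1
        have := (h1.comp h2).const_mul c
        simpa using this
      exact Tendsto.congr' heq.symm hlim
  rw [hsum] at main
  exact main
end

section
/- Let N, K, L be positive integers with K < N and let ψ(L) = Σ_{i=1}^{N-K} (-1)^{i+1} C(N-K,i) (i + 1 + iN/K)^{L-1} / i^{L}. Then ψ(L) / ((N-K) · (2 + N/K)^{L-1}) → 1 as L → ∞. -/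
open Real Finset Filter

/-- The `i = 1` term dominates: `ψ(L)/((N-K)·(2+N/K)^{L-1}) → 1` as `L → ∞`, where
`ψ(L) = Σ_{i=1}^{N-K} (-1)^{i+1} C(N-K,i) (i+1+iN/K)^{L-1}/i^L`. -/
theorem stmt_10 (N K : ℕ) (hN : 0 < N) (hK : 0 < K) (hKN : K < N) :
    Tendsto (fun L : ℕ =>
        (∑ i ∈ Finset.Icc 1 (N - K),
            (-1 : ℝ) ^ (i + 1) * (Nat.choose (N - K) i : ℝ) *
              ((i : ℝ) + 1 + (i : ℝ) * ((N : ℝ) / (K : ℝ))) ^ (L - 1) / (i : ℝ) ^ L) /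
          (((N : ℝ) - (K : ℝ)) * (2 + (N : ℝ) / (K : ℝ)) ^ (L - 1)))
      atTop (nhds 1) := by
  have hKpos : (0:ℝ) < (K:ℝ) := by exact_mod_cast hK
  set r : ℝ := (N:ℝ)/(K:ℝ) with hrdef
  have hr : (1:ℝ) < r := (one_lt_div hKpos).2 (by exact_mod_cast hKN)
  have hb : (0:ℝ) < 2 + r := by linarith
  have hMpos : (0:ℝ) < (N:ℝ) - (K:ℝ) := by
    have : (K:ℝ) < N := by exact_mod_cast hKN
    linarith
  have hNK : ((N:ℝ) - (K:ℝ)) = ((N - K : ℕ) : ℝ) := by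
    rw [Nat.cast_sub hKN.le]
  have h1M : 1 ≤ N - K := Nat.le_sub_of_add_le (by omega)
  have key : ∀ i ∈ Finset.Icc 1 (N - K),
      Tendsto (fun L : ℕ =>
          (-1 : ℝ) ^ (i + 1) * (Nat.choose (N - K) i : ℝ) *
              ((i : ℝ) + 1 + (i : ℝ) * r) ^ (L - 1) / (i : ℝ) ^ L /
            (((N : ℝ) - (K : ℝ)) * (2 + r) ^ (L - 1)))
        atTop (nhds (if i = 1 then (1:ℝ) else 0)) := by
    intro i hi
    obtain ⟨hi1, hiM⟩ := Finset.mem_Icc.mp hi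
    have hipos : (0:ℝ) < (i:ℝ) := by exact_mod_cast hi1
    rcases eq_or_lt_of_le hi1 with h1 | h2
    · -- i = 1
      subst h1
      rw [if_pos rfl]
      have hM0 : ((N - K : ℕ) : ℝ) ≠ 0 := by rw [← hNK]; exact hMpos.ne'
      refine Tendsto.congr (fun L => ?_) (tendsto_const_nhds (x := (1:ℝ)))
      have hpow : (2 + r) ^ (L - 1) ≠ 0 := pow_ne_zero _ hb.ne'
      simp only [Nat.cast_one, Nat.choose_one_right, one_pow, one_mul, div_one]
      rw [show (1:ℝ) + 1 + r = 2 + r by ring, hNK]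
      field_simp
      norm_num
    · -- i ≥ 2
      have hi2 : (2:ℝ) ≤ (i:ℝ) := by exact_mod_cast h2
      have hif : i ≠ 1 := by omega
      simp only [if_neg hif]
      set q : ℝ := ((i:ℝ) + 1 + (i:ℝ) * r) / ((i:ℝ) * (2 + r)) with hq
      have hq0 : 0 ≤ q := by positivity
      have hq1 : q < 1 := by
        rw [div_lt_one (by positivity)]
        nlinarith
      set c : ℝ := (-1 : ℝ) ^ (i + 1) * (Nat.choose (N - K) i : ℝ) /
          ((i:ℝ) * ((N:ℝ) - (K:ℝ))) with hc
      have hq0' : Tendsto (fun L : ℕ => c * q ^ (L - 1)) atTop (nhds (c * 0)) :=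
        ((tendsto_pow_atTop_nhds_zero_of_lt_one hq0 hq1).comp
          (tendsto_sub_atTop_nat 1)).const_mul c
      rw [mul_zero] at hq0'
      refine hq0'.congr' ?_
      filter_upwards [eventually_ge_atTop 1] with L hL
      obtain ⟨m, rfl⟩ := Nat.exists_eq_add_of_le' hL
      simp only [Nat.add_sub_cancel, hc, hq, div_pow, mul_pow, pow_succ]
      set P := ((i:ℝ) + 1 + (i:ℝ) * r) ^ m with hP
      set B := (2 + r) ^ m with hB
      set Q := (i:ℝ) ^ m with hQ
      have hB0 : B ≠ 0 := pow_ne_zero _ hb.ne'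
      have hQ0 : Q ≠ 0 := pow_ne_zero _ hipos.ne'
      field_simp
  have hsum : (∑ i ∈ Finset.Icc 1 (N - K), (if i = 1 then (1:ℝ) else 0)) = 1 := by
    rw [Finset.sum_ite_eq' (Finset.Icc 1 (N - K)) 1 (fun _ => (1:ℝ))]
    simp [h1M]
  have htot := tendsto_finset_sum (Finset.Icc 1 (N - K)) key
  rw [hsum] at htot
  refine htot.congr fun L => ?_
  rw [eq_comm, Finset.sum_div]
end
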